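/- Let n be odd and f : F_{2^n} → F_{2^n} be an APN map with |Image(f)| = (2^n+1)/3. Then exactly one element y₀ ∈ Image(f) has exactly 2 preimages and every other element of Image(f) has exactly 3 preimages. -/
import Mathlib


open Finset
open scoped Classical

/-- Number of preimages of `y` under `f`. -/
noncomputable def preCard {F : Type*} [Fintype F] (f : F → F) (y : F) : ℕ :=
  (Finset.univ.filter fun x => f x = y).card

/-- `M_r(f)`: the number of elements with exactly `r` preimages under `f`. -/
noncomputable def Mcount {F : Type*} [Fintype F] (f : F → F) (r : ℕ) : ℕ :=
  (Finset.univ.filter fun y => preCard f y = r).card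

/-- `f` is almost perfect nonlinear: every equation `f (x+a) + f x = b` with `a ≠ 0`
has at most two solutions. -/
def IsAPN {F : Type*} [Field F] [Fintype F] (f : F → F) : Prop :=
  ∀ a b : F, a ≠ 0 → (Finset.univ.filter fun x => f (x + a) + f x = b).card ≤ 2

lemma int_quad_nonneg (t : ℤ) : 0 ≤ (t - 2) * (t - 3) := by
  have he : (t - 2) * (t - 3) = (2 - t) * (3 - t) := by ring
  rcases le_or_gt t 2 with h | h
  · rw [he]; exact mul_nonneg (by linarith) (by linarith)
  · have h3 : 3 ≤ t := h
    exact mul_nonneg (by linarith) (by linarith)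

/-- if `n` is odd and an APN map on `F_{2^n}` has minimal image size
`(2^n+1)/3`, then exactly one image element has 2 preimages and all others have 3. -/
theorem apn_min_image_odd_preimage_distribution {F : Type*} [Field F] [Fintype F] [CharP F 2]
    {n : ℕ} (hn : Odd n) (hcard : Fintype.card F = 2 ^ n) {f : F → F} (hf : IsAPN f)
    (himg : 3 * (Finset.image f Finset.univ).card = 2 ^ n + 1) :
    ∃ y₀ ∈ Finset.image f Finset.univ, preCard f y₀ = 2 ∧
      ∀ y ∈ Finset.image f Finset.univ, y ≠ y₀ → preCard f y = 3 := by
  classical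
  set S : Finset F := Finset.image f Finset.univ with hS
  set c : ℕ := 2 ^ n with hc
  -- sum of fiber sizes over the image is the cardinality of F
  have hsum : ∑ y ∈ S, preCard f y = c := by
    have h := Finset.card_eq_sum_card_fiberwise
      (f := f) (s := (Finset.univ : Finset F)) (t := S)
      (fun x _ => Finset.mem_image_of_mem f (Finset.mem_univ x))
    simpa [preCard, hcard, Finset.card_univ] using h.symm
  -- the set of ordered distinct collision pairs
  set P : Finset (F × F) :=
    Finset.univ.biUnion (fun y => ((Finset.univ.filter fun x => f x = y)).offDiag) with hP
  have hPcard : P.card = ∑ y ∈ (Finset.univ : Finset F),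
      (preCard f y * preCard f y - preCard f y) := by
    rw [hP, Finset.card_biUnion]
    · exact Finset.sum_congr rfl fun y _ => by rw [Finset.offDiag_card]; rfl
    · intro y _ z _ hyz
      refine Finset.disjoint_left.mpr fun p hp hp' => ?_
      have h1 := (Finset.mem_offDiag.mp hp).1
      have h2 := (Finset.mem_offDiag.mp hp').1
      simp only [Finset.mem_filter] at h1 h2
      exact hyz (h1.2 ▸ h2.2 ▸ rfl)
  -- bound P.card via APN
  have hPbound : P.card ≤ 2 * (c - 1) := by
    have hmem : ∀ p ∈ P, p.1 + p.2 ∈ Finset.univ.filter (fun a : F => a ≠ 0) := by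
      intro p hp
      rcases Finset.mem_biUnion.mp hp with ⟨y, _, hpy⟩
      rcases Finset.mem_offDiag.mp hpy with ⟨_, _, hne⟩
      simp only [Finset.mem_filter, Finset.mem_univ, true_and]
      intro h0
      apply hne
      have h' : p.1 + (p.2 + p.2) = p.2 := by rw [← add_assoc, h0, zero_add]
      rwa [CharTwo.add_self_eq_zero, add_zero] at h'
    have hfib := Finset.card_eq_sum_card_fiberwise hmem
    rw [hfib]
    have hcardne : (Finset.univ.filter (fun a : F => a ≠ 0)).card = c - 1 := by
      have he : (Finset.univ.filter (fun a : F => a ≠ 0)) = Finset.univ \ {0} := by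
        ext a; simp
      rw [he, Finset.card_sdiff_of_subset (by simp), Finset.card_univ, hcard]
      simp
    calc ∑ a ∈ Finset.univ.filter (fun a : F => a ≠ 0),
          (P.filter fun p => p.1 + p.2 = a).card
        ≤ ∑ _a ∈ Finset.univ.filter (fun a : F => a ≠ 0), 2 := by
          refine Finset.sum_le_sum fun a ha => ?_
          have ha0 : a ≠ 0 := (Finset.mem_filter.mp ha).2
          have hmaps : ∀ p ∈ P.filter fun p => p.1 + p.2 = a,
              (p.2 : F) ∈ Finset.univ.filter fun x => f (x + a) + f x = 0 := by
            intro p hp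
            obtain ⟨hpP, hpa⟩ := Finset.mem_filter.mp hp
            rcases Finset.mem_biUnion.mp hpP with ⟨y, _, hpy⟩
            rcases Finset.mem_offDiag.mp hpy with ⟨h1, h2, _⟩
            simp only [Finset.mem_filter, Finset.mem_univ, true_and] at h1 h2 ⊢
            have hp1 : p.2 + a = p.1 := by
              rw [← hpa, add_comm p.1 p.2, ← add_assoc, CharTwo.add_self_eq_zero, zero_add]
            rw [hp1, h1, h2, CharTwo.add_self_eq_zero]
          refine le_trans (Finset.card_le_card_of_injOn (fun p => p.2) hmaps ?_) (hf a 0 ha0)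
          intro p hp q hq hpq
          obtain ⟨_, hpa⟩ := Finset.mem_filter.mp hp
          obtain ⟨_, hqa⟩ := Finset.mem_filter.mp hq
          have h2 : p.2 = q.2 := hpq
          have h1 : p.1 = q.1 := by
            have he : p.1 + p.2 = q.1 + q.2 := by rw [hpa, hqa]
            rw [h2] at he
            have he2 := congrArg (fun z => z + q.2) he
            simpa [add_assoc, CharTwo.add_self_eq_zero] using he2
          exact Prod.ext h1 h2
        _ = 2 * (c - 1) := by rw [Finset.sum_const, hcardne, smul_eq_mul, mul_comm]
  -- hence sum over S of ω²-ω ≤ 2(c-1), in ℕ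
  have hsum2 : ∑ y ∈ S, (preCard f y * preCard f y - preCard f y) ≤ 2 * (c - 1) := by
    calc ∑ y ∈ S, (preCard f y * preCard f y - preCard f y)
        ≤ ∑ y ∈ (Finset.univ : Finset F), (preCard f y * preCard f y - preCard f y) :=
          Finset.sum_le_sum_of_subset (Finset.subset_univ S)
      _ = P.card := hPcard.symm
      _ ≤ 2 * (c - 1) := hPbound
  -- move to ℤ
  have hc1 : 1 ≤ c := Nat.one_le_two_pow
  have hsumZ : ∑ y ∈ S, ((preCard f y : ℤ)) = (c : ℤ) := by exact_mod_cast hsum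
  have hself : ∀ y : F, preCard f y ≤ preCard f y * preCard f y := by
    intro y
    rcases Nat.eq_zero_or_pos (preCard f y) with h | h
    · simp [h]
    · exact Nat.le_mul_of_pos_left _ h
  have hsum2Z : ∑ y ∈ S, ((preCard f y : ℤ) * (preCard f y : ℤ) - (preCard f y : ℤ))
      ≤ 2 * ((c : ℤ) - 1) := by
    have e1 : ∀ y ∈ S, ((preCard f y * preCard f y - preCard f y : ℕ) : ℤ)
        = (preCard f y : ℤ) * (preCard f y : ℤ) - (preCard f y : ℤ) := by
      intro y _
      rw [Nat.cast_sub (hself y), Nat.cast_mul]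
    rw [← Finset.sum_congr rfl e1, ← Nat.cast_sum]
    have e2 : ((2 * (c - 1) : ℕ) : ℤ) = 2 * ((c : ℤ) - 1) := by
      rw [Nat.cast_mul, Nat.cast_sub hc1]; norm_num
    rw [← e2]
    exact_mod_cast hsum2
  have himgZ : 3 * (S.card : ℤ) = (c : ℤ) + 1 := by exact_mod_cast himg
  -- key: sum of (ω-2)(ω-3) ≤ 0, and each term ≥ 0, so all are 0
  have hexp : ∑ y ∈ S, ((preCard f y : ℤ) - 2) * ((preCard f y : ℤ) - 3)
      = (∑ y ∈ S, ((preCard f y : ℤ) * (preCard f y : ℤ) - (preCard f y : ℤ)))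
        - 4 * (∑ y ∈ S, (preCard f y : ℤ)) + 6 * (S.card : ℤ) := by
    have e : ∀ y ∈ S, ((preCard f y : ℤ) - 2) * ((preCard f y : ℤ) - 3)
        = ((preCard f y : ℤ) * (preCard f y : ℤ) - (preCard f y : ℤ))
          - 4 * (preCard f y : ℤ) + 6 := fun y _ => by ring
    rw [Finset.sum_congr rfl e, Finset.sum_add_distrib, Finset.sum_sub_distrib,
      ← Finset.mul_sum, Finset.sum_const, nsmul_eq_mul]
    ring
  have hkey : ∑ y ∈ S, ((preCard f y : ℤ) - 2) * ((preCard f y : ℤ) - 3) ≤ 0 := by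
    rw [hexp]; linarith
  have hzero : ∑ y ∈ S, ((preCard f y : ℤ) - 2) * ((preCard f y : ℤ) - 3) = 0 :=
    le_antisymm hkey (Finset.sum_nonneg fun y _ => int_quad_nonneg _)
  have hval : ∀ y ∈ S, preCard f y = 2 ∨ preCard f y = 3 := by
    intro y hy
    have h0 := (Finset.sum_eq_zero_iff_of_nonneg (fun y _ => int_quad_nonneg _)).mp hzero y hy
    rcases mul_eq_zero.mp h0 with h | h
    · left; have : (preCard f y : ℤ) = 2 := by linarith [sub_eq_zero.mp h]
      exact_mod_cast this
    · right; have : (preCard f y : ℤ) = 3 := by linarith [sub_eq_zero.mp h]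
      exact_mod_cast this
  -- count elements with two preimages
  set A : Finset F := S.filter (fun y => preCard f y = 2) with hA
  have hAsub : A ⊆ S := Finset.filter_subset _ _
  have hsplit : (c : ℤ) = 2 * (A.card : ℤ) + 3 * ((S \ A).card : ℤ) := by
    rw [← hsumZ, ← Finset.sum_sdiff hAsub]
    have h2 : ∑ y ∈ A, (preCard f y : ℤ) = 2 * (A.card : ℤ) := by
      have e : ∀ y ∈ A, (preCard f y : ℤ) = (2 : ℤ) := fun y hy => by
        exact_mod_cast congrArg (Nat.cast : ℕ → ℤ) (Finset.mem_filter.mp hy).2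
      rw [Finset.sum_congr rfl e, Finset.sum_const, nsmul_eq_mul, mul_comm]
    have h3 : ∑ y ∈ S \ A, (preCard f y : ℤ) = 3 * ((S \ A).card : ℤ) := by
      have e : ∀ y ∈ S \ A, (preCard f y : ℤ) = (3 : ℤ) := by
        intro y hy
        obtain ⟨hyS, hyA⟩ := Finset.mem_sdiff.mp hy
        rcases hval y hyS with h | h
        · exact absurd (Finset.mem_filter.mpr ⟨hyS, h⟩) hyA
        · exact_mod_cast congrArg (Nat.cast : ℕ → ℤ) h
      rw [Finset.sum_congr rfl e, Finset.sum_const, nsmul_eq_mul, mul_comm]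
    rw [h2, h3]; ring
  have hsd : ((S \ A).card : ℤ) = (S.card : ℤ) - (A.card : ℤ) := by
    rw [Finset.card_sdiff_of_subset hAsub, Nat.cast_sub (Finset.card_le_card hAsub)]
  have hA1 : A.card = 1 := by
    have : (A.card : ℤ) = 1 := by rw [hsd] at hsplit; linarith
    exact_mod_cast this
  obtain ⟨y₀, hy₀⟩ := Finset.card_eq_one.mp hA1
  have hy₀A : y₀ ∈ A := hy₀ ▸ Finset.mem_singleton_self y₀
  obtain ⟨hy₀S, hy₀2⟩ := Finset.mem_filter.mp hy₀A
  refine ⟨y₀, hy₀S, hy₀2, fun y hyS hyne => ?_⟩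
  rcases hval y hyS with h | h
  · exact absurd (by
      have : y ∈ A := Finset.mem_filter.mpr ⟨hyS, h⟩
      rw [hy₀] at this
      exact Finset.mem_singleton.mp this) hyne
  · exact h
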